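/- In the setting of a Frobenius structure (∘, ⟨·,·⟩, E) with a nilpotent vector field n satisfying [E, n] = 0 and the compatibility [E, x∘y] − [E,x]∘y − x∘[E,y] = x∘y, one has [E, n^{∘k}] = (k−1)·n^{∘k} for all 1 ≤ k ≤ d, and consequently each J_k = Ker(n^{∘k} ∘ ·) ⊂ TM is E-closed: x ∈ Γ(J_k) implies [E,x] ∈ Γ(J_k). -/
import Mathlib


/-- `opow mul e n k` is the `k`-fold `∘`-power `n^{∘k}` (with `n^{∘0} = e`, the
unit vector field). -/
def opow {Θ : Type*} (mul : Θ → Θ → Θ) (e n : Θ) : ℕ → Θ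
  | 0 => e
  | k + 1 => mul n (opow mul e n k)

/-- in a Frobenius structure (vector fields `Θ` with multiplication
`∘ = mul`, unit `e`, Lie bracket `br`, Euler field `E` satisfying
`[E,x∘y] − [E,x]∘y − x∘[E,y] = x∘y`), if `n` is a vector field with
`n^{∘d} = 0` and `[E,n] = 0`, then `[E, n^{∘k}] = (k−1)·n^{∘k}` for `1 ≤ k ≤ d`,
and consequently each `J_k = Ker(n^{∘k} ∘ ·)` is `E`-closed. -/
theorem stmt13 {Θ : Type*} [AddCommGroup Θ]
    (br : Θ → Θ → Θ) (mul : Θ → Θ → Θ) (e E n : Θ) (d : ℕ)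
    (hmulcomm : ∀ x y, mul x y = mul y x)
    (hmulassoc : ∀ x y z, mul (mul x y) z = mul x (mul y z))
    (hunit : ∀ x, mul e x = x)
    (hmuladd : ∀ x y z, mul x (y + z) = mul x y + mul x z)
    (hbradd : ∀ x y z, br x (y + z) = br x y + br x z)
    (hE1 : ∀ x y, br E (mul x y) = mul (br E x) y + mul x (br E y) + mul x y)
    (hnil : opow mul e n d = 0)
    (hEn : br E n = 0) :
    -- [E, n^{∘k}] = (k−1)·n^{∘k}
    (∀ k : ℕ, 1 ≤ k → k ≤ d →
      br E (opow mul e n k) = ((k : ℤ) - 1) • opow mul e n k) ∧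
    -- J_k = Ker(n^{∘k} ∘ ·) is E-closed
    (∀ k : ℕ, 1 ≤ k → k ≤ d → ∀ x : Θ,
      mul (opow mul e n k) x = 0 → mul (opow mul e n k) (br E x) = 0) := by

  -- mul is ℤ-linear in the second argument
  have hmulsmul : ∀ (c : ℤ) (x y : Θ), mul x (c • y) = c • mul x y := by
    intro c x y
    exact map_zsmul (AddMonoidHom.mk' (mul x) (hmuladd x)) c y
  have hbr0 : br E (0 : Θ) = 0 := by
    have := hbradd E 0 0
    simpa using this
  have h1 : ∀ k : ℕ, 1 ≤ k → k ≤ d →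
      br E (opow mul e n k) = ((k : ℤ) - 1) • opow mul e n k := by
    intro k
    induction k with
    | zero => intro h; omega
    | succ k ih =>
      intro _ hkd
      rcases Nat.eq_zero_or_pos k with hk0 | hk1
      · subst hk0
        show br E (mul n (opow mul e n 0)) = _
        show br E (mul n e) = _
        rw [hmulcomm, hunit, hEn]
        simp
      · have hkle : k ≤ d := by omega
        have hk := ih hk1 hkle
        show br E (mul n (opow mul e n k)) = _
        rw [hE1, hEn, hk, hmulsmul]
        have : mul 0 (opow mul e n k) = 0 := by
          rw [hmulcomm]
          have := hmuladd (opow mul e n k) 0 0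
          simpa using this
        rw [this]
        show (0 : Θ) + _ + _ = _
        rw [zero_add]
        have : mul n (opow mul e n k) = opow mul e n (k+1) := rfl
        rw [this]
        push_cast
        module
  refine ⟨h1, ?_⟩
  intro k hk1 hkd x hx
  have := hE1 (opow mul e n k) x
  rw [hx, hbr0, h1 k hk1 hkd, hmulcomm, hmulsmul, hmulcomm x, hx] at this
  have h2 : mul (opow mul e n k) (br E x) = -(((k:ℤ)-1) • (0:Θ)) - 0 := by
    rw [eq_comm] at this
    linear_combination (norm := abel) this
  simpa using h2
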